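/- Let S be an integral domain, σ ∈ Aut(S) of order n, a, b ∈ S^×, and suppose n ∤ m. Then any nonzero ring homomorphism G : S_a → S_b whose restriction to S is an automorphism τ commuting with σ is monomial of degree one: G(t) = α t for some nonzero α ∈ S. -/

import Mathlib

open Finset

noncomputable section

namespace PetitFormal

variable {S : Type*}

/-- Partial norm `N_i^τ(β) = ∏_{j=0}^{i-1} τ^j(β)`. -/
def pnorm [CommRing S] (τ : RingAut S) (i : ℕ) (β : S) : S :=
  ∏ j ∈ Finset.range i, (τ ^ j) β

/-- Multiplication in the skew polynomial ring `S[t;σ]`, with `t·a = σ(a)·t`,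
modelled on finitely supported functions `ℕ →₀ S`. -/
def skewMul [CommRing S] (σ : RingAut S) (x y : ℕ →₀ S) : ℕ →₀ S :=
  x.sum fun i c => y.sum fun j d => Finsupp.single (i + j) (c * (σ ^ i) d)

/-- Embedding of degree `< m` polynomials into `ℕ →₀ S`. -/
def toPoly [CommRing S] {m : ℕ} (x : Fin m → S) : ℕ →₀ S :=
  ∑ i : Fin m, Finsupp.single (i : ℕ) (x i)

/-- One pass of right division by the monic polynomial `f = t^m - f0(t)`:
`reduceAux σ m f0 K` reduces a skew polynomial supported in `[0, m+K)`
to one supported in `[0, m)`, using `t^{m+j} ≡ ∑_i σ^j(f0 i) t^{j+i}` (mod_r f). -/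
def reduceAux [CommRing S] (σ : RingAut S) (m : ℕ) (f0 : Fin m → S) :
    ℕ → (ℕ →₀ S) → (ℕ →₀ S)
  | 0, x => x
  | K + 1, x =>
      reduceAux σ m f0 K
        (x - Finsupp.single (m + K) (x (m + K))
          + ∑ j : Fin m, Finsupp.single (K + (j : ℕ)) (x (m + K) * (σ ^ K) (f0 j)))

/-- Multiplication in the (generally nonassociative) Petit algebra
`S_f = S[t;σ]/S[t;σ](t^m - f0(t))`: multiply in `S[t;σ]` and reduce by right
division by `f = t^m - f0(t)`. -/
def petitMul [CommRing S] (σ : RingAut S) (m : ℕ) (f0 : Fin m → S)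
    (x y : Fin m → S) : Fin m → S :=
  fun d => (reduceAux σ m f0 m (skewMul σ (toPoly x) (toPoly y))) (d : ℕ)

/-- The coefficient vector of the constant `a`, so that `t^m - f0 = t^m - a`. -/
def constF [CommRing S] (m : ℕ) (a : S) : Fin m → S :=
  fun i => if (i : ℕ) = 0 then a else 0

/-- Multiplication in the Petit algebra `S_a = S[t;σ]/S[t;σ](t^m - a)`. -/
def petitMulC [CommRing S] (σ : RingAut S) (m : ℕ) (a : S) :
    (Fin m → S) → (Fin m → S) → (Fin m → S) :=
  petitMul σ m (constF m a)

/-- The monomial `c t^k` as an element of the Petit algebra (zero if `k ≥ m`). -/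
def mono [CommRing S] (m : ℕ) (c : S) (k : ℕ) : Fin m → S :=
  fun i => if (i : ℕ) = k then c else 0

/-- The identity `1 = 1·t^0` of the Petit algebra. -/
def pone [CommRing S] (m : ℕ) : Fin m → S := mono m 1 0

/-- Left-nested power `L(z,s) = z(z(⋯(z)))` (`s` factors) in the Petit algebra. -/
def lpow [CommRing S] (σ : RingAut S) (m : ℕ) (f0 : Fin m → S) (z : Fin m → S) :
    ℕ → Fin m → S
  | 0 => pone m
  | s + 1 => petitMul σ m f0 z (lpow σ m f0 z s)

/-- `G` is a (unital) ring homomorphism from the Petit algebra `S_f` to `S_g`. -/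
def IsPetitHom [CommRing S] (σ : RingAut S) (m : ℕ) (f0 g0 : Fin m → S)
    (G : (Fin m → S) → (Fin m → S)) : Prop :=
  (∀ x y, G (x + y) = G x + G y) ∧
  (∀ x y, G (petitMul σ m f0 x y) = petitMul σ m g0 (G x) (G y)) ∧
  G (pone m) = pone m

/-- `G` is a (unital) ring endomorphism of the skew polynomial ring `S[t;σ]`. -/
def IsSkewHom [CommRing S] (σ : RingAut S) (G : (ℕ →₀ S) → (ℕ →₀ S)) : Prop :=
  (∀ x y, G (x + y) = G x + G y) ∧
  (∀ x y, G (skewMul σ x y) = skewMul σ (G x) (G y)) ∧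
  G (Finsupp.single 0 1) = Finsupp.single 0 1

/-- `G` is a (unital) ring homomorphism from `S[t;σ]` to the Petit algebra `S_g`. -/
def IsSkewToPetitHom [CommRing S] (σ : RingAut S) (m : ℕ) (g0 : Fin m → S)
    (G : (ℕ →₀ S) → (Fin m → S)) : Prop :=
  (∀ x y, G (x + y) = G x + G y) ∧
  (∀ x y, G (skewMul σ x y) = petitMul σ m g0 (G x) (G y)) ∧
  G (Finsupp.single 0 1) = pone m

/-- The monomial map `G_{τ,α,k}` on `S[t;σ]`:
`∑ a_i t^i ↦ ∑ τ(a_i) (α t^k)^i = ∑ τ(a_i) N_i^{σ^k}(α) t^{ik}`. -/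
def skewMonomialMap [CommRing S] (σ τ : RingAut S) (α : S) (k : ℕ)
    (x : ℕ →₀ S) : ℕ →₀ S :=
  x.sum fun i c => Finsupp.single (i * k) (τ c * pnorm (σ ^ k) i α)

/-- The monomial map `G_{τ,α,k}` from `S[t;σ]` into the Petit algebra `S_g`:
`∑ a_i t^i ↦ ∑ τ(a_i) (α t^k)^i`, powers computed by left nesting. -/
def skewToPetitMonomialMap [CommRing S] (σ τ : RingAut S) (m : ℕ)
    (g0 : Fin m → S) (α : S) (k : ℕ) (x : ℕ →₀ S) : Fin m → S :=
  x.sum fun i c => τ c • lpow σ m g0 (mono m α k) i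

/-- The monomial map `G_{τ,α,k}` between Petit algebras of degree `m`:
`∑_{i<m} a_i t^i ↦ ∑_{i<m} τ(a_i) (α t^k)^i`, powers computed by left nesting
in the codomain `S_g`. -/
def petitMonomialMap [CommRing S] (σ τ : RingAut S) (m : ℕ)
    (g0 : Fin m → S) (α : S) (k : ℕ) (x : Fin m → S) : Fin m → S :=
  ∑ i : Fin m, τ (x i) • lpow σ m g0 (mono m α k) (i : ℕ)

/-- The Hamming weight: the number of nonzero coefficients. -/
def hwt [CommRing S] {m : ℕ} (x : Fin m → S) : ℕ := by
  classical exact (Finset.univ.filter fun i => x i ≠ 0).card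

end PetitFormal

open PetitFormal


namespace PetitProof
open PetitFormal
variable {S : Type*} [CommRing S]

/-- Coefficient of the skew product of two truncated polynomials. -/
def Dc (σ : RingAut S) (m : ℕ) (x y : Fin m → S) (e : ℕ) : S :=
  ∑ i : Fin m, ∑ j : Fin m,
    if (i : ℕ) + (j : ℕ) = e then x i * (σ ^ (i : ℕ)) (y j) else 0

lemma skewMul_toPoly (σ : RingAut S) {m : ℕ} (x y : Fin m → S) :
    skewMul σ (toPoly x) (toPoly y)
      = ∑ i : Fin m, ∑ j : Fin m,
          Finsupp.single ((i : ℕ) + (j : ℕ)) (x i * (σ ^ (i : ℕ)) (y j)) := by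
  classical
  unfold skewMul toPoly
  rw [← Finsupp.sum_finset_sum_index]
  · refine Finset.sum_congr rfl fun i _ => ?_
    rw [Finsupp.sum_single_index]
    · rw [← Finsupp.sum_finset_sum_index]
      · refine Finset.sum_congr rfl fun j _ => ?_
        rw [Finsupp.sum_single_index]
        simp
      · intro j; simp
      · intro j d1 d2; simp [mul_add, Finsupp.single_add]
    · simp [Finsupp.sum]
  · intro i; simp [Finsupp.sum]
  · intro i c1 c2
    rw [← Finsupp.sum_add]
    refine Finsupp.sum_congr fun j _ => ?_
    simp [add_mul, Finsupp.single_add]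

lemma skewMul_toPoly_apply (σ : RingAut S) {m : ℕ} (x y : Fin m → S) (e : ℕ) :
    (skewMul σ (toPoly x) (toPoly y)) e = Dc σ m x y e := by
  classical
  rw [skewMul_toPoly]
  simp only [Dc, Finset.sum_apply', Finsupp.single_apply]

lemma reduceAux_const_apply (σ : RingAut S) {m : ℕ} (hm : 0 < m) (b' : S) :
    ∀ (K : ℕ), K ≤ m → ∀ (x : ℕ →₀ S) (d : ℕ), d < m →
      reduceAux σ m (constF m b') K x d
        = x d + if d < K then x (m + d) * (σ ^ d) b' else 0 := by
  intro K
  induction K with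
  | zero => intro _ x d hd; simp [reduceAux]
  | succ K ih =>
    intro hK x d hd
    have hKm : K < m := hK
    have hsum : (∑ j : Fin m, Finsupp.single (K + (j : ℕ))
          (x (m + K) * (σ ^ K) (constF m b' j)))
        = Finsupp.single K (x (m + K) * (σ ^ K) b') := by
      rw [Finset.sum_eq_single (⟨0, hm⟩ : Fin m)]
      · simp [constF]
      · intro j _ hj
        have hj0 : (j : ℕ) ≠ 0 := by
          simpa [Fin.ext_iff] using hj
        simp [constF, hj0]
      · simp
    rw [reduceAux, hsum, ih (le_of_lt hKm)]
    · have h1 : (x - Finsupp.single (m + K) (x (m + K))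
          + Finsupp.single K (x (m + K) * (σ ^ K) b')) d
          = x d + if K = d then x (m + K) * (σ ^ K) b' else 0 := by
        have : m + K ≠ d := by omega
        simp only [Finsupp.add_apply, Finsupp.sub_apply, Finsupp.single_apply, this,
          if_false, sub_zero]
      have h2 : (x - Finsupp.single (m + K) (x (m + K))
          + Finsupp.single K (x (m + K) * (σ ^ K) b')) (m + d)
          = x (m + d) - (if m + K = m + d then x (m + K) else 0) := by
        have : K ≠ m + d := by omega
        simp [Finsupp.single_apply, this]
      rw [h1, h2]
      rcases lt_trichotomy d K with h | h | h
      · have h' : d < K + 1 := by omega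
        have hne : K ≠ d := by omega
        have hne2 : m + K ≠ m + d := by omega
        simp [h, h', hne, hne2]
      · subst h
        simp [lt_irrefl, Nat.lt_succ_self]
      · have h1' : ¬ d < K := by omega
        have h2' : ¬ d < K + 1 := by omega
        have hne : K ≠ d := by omega
        simp [h1', h2', hne]
    · exact hd

lemma petitMul_const_apply (σ : RingAut S) {m : ℕ} (hm : 0 < m) (b' : S)
    (x y : Fin m → S) (d : Fin m) :
    petitMul σ m (constF m b') x y d
      = Dc σ m x y (d : ℕ) + Dc σ m x y (m + (d : ℕ)) * (σ ^ (d : ℕ)) b' := by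
  unfold petitMul
  rw [reduceAux_const_apply σ hm b' m le_rfl _ _ d.isLt,
    skewMul_toPoly_apply, skewMul_toPoly_apply]
  simp [d.isLt]

lemma Dc_eq_zero {σ : RingAut S} {m : ℕ} {x y : Fin m → S} {e : ℕ}
    (h : ∀ i j : Fin m, (i : ℕ) + (j : ℕ) = e → x i * (σ ^ (i : ℕ)) (y j) = 0) :
    Dc σ m x y e = 0 := by
  unfold Dc
  refine Finset.sum_eq_zero fun i _ => Finset.sum_eq_zero fun j _ => ?_
  by_cases hij : (i : ℕ) + (j : ℕ) = e
  · rw [if_pos hij]; exact h i j hij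
  · rw [if_neg hij]

lemma exists_of_Dc_ne_zero {σ : RingAut S} {m : ℕ} {x y : Fin m → S} {e : ℕ}
    (h : Dc σ m x y e ≠ 0) :
    ∃ i j : Fin m, (i : ℕ) + (j : ℕ) = e ∧ x i ≠ 0 ∧ y j ≠ 0 := by
  by_contra hc
  push_neg at hc
  refine h (Dc_eq_zero fun i j hij => ?_)
  by_cases hx : x i = 0
  · rw [hx, zero_mul]
  · rcases hc i j hij hx with hy
    rw [hy, map_zero, mul_zero]

lemma Dc_top {σ : RingAut S} {m : ℕ} {x y : Fin m → S} {p q : Fin m}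
    (hx : ∀ i, x i ≠ 0 → (i : ℕ) ≤ (p : ℕ)) (hy : ∀ j, y j ≠ 0 → (j : ℕ) ≤ (q : ℕ)) :
    Dc σ m x y ((p : ℕ) + (q : ℕ)) = x p * (σ ^ (p : ℕ)) (y q) := by
  classical
  unfold Dc
  rw [← Finset.sum_product']
  rw [Finset.sum_eq_single (p, q)]
  · simp
  · rintro ⟨i, j⟩ _ hne
    by_cases hij : (i : ℕ) + (j : ℕ) = (p : ℕ) + (q : ℕ)
    · rw [if_pos hij]
      by_cases hxi : x i = 0
      · rw [hxi, zero_mul]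
      · by_cases hyj : y j = 0
        · rw [hyj, map_zero, mul_zero]
        · exfalso
          have h1 := hx i hxi
          have h2 := hy j hyj
          have : (i : ℕ) = (p : ℕ) ∧ (j : ℕ) = (q : ℕ) := by omega
          exact hne (Prod.ext (Fin.ext this.1) (Fin.ext this.2))
    · rw [if_neg hij]
  · intro hmem
    exact absurd (Finset.mem_product.mpr ⟨Finset.mem_univ p, Finset.mem_univ q⟩) hmem

lemma Dc_mono_left (σ : RingAut S) {m : ℕ} (c : S) {p : ℕ} (hp : p < m)
    (y : Fin m → S) (e : ℕ) :
    Dc σ m (mono m c p) y e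
      = ∑ j : Fin m, if p + (j : ℕ) = e then c * (σ ^ p) (y j) else 0 := by
  classical
  unfold Dc
  rw [Finset.sum_eq_single (⟨p, hp⟩ : Fin m)]
  · simp [mono]
  · intro i _ hi
    have : (i : ℕ) ≠ p := by simpa [Fin.ext_iff] using hi
    refine Finset.sum_eq_zero fun j _ => ?_
    simp [mono, this]
  · simp

lemma Dc_mono_right (σ : RingAut S) {m : ℕ} (c : S) {q : ℕ} (hq : q < m)
    (x : Fin m → S) (e : ℕ) :
    Dc σ m x (mono m c q) e
      = ∑ i : Fin m, if (i : ℕ) + q = e then x i * (σ ^ (i : ℕ)) c else 0 := by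
  classical
  unfold Dc
  refine Finset.sum_congr rfl fun i _ => ?_
  rw [Finset.sum_eq_single (⟨q, hq⟩ : Fin m)]
  · simp [mono]
  · intro j _ hj
    have : (j : ℕ) ≠ q := by simpa [Fin.ext_iff] using hj
    simp [mono, this]
  · simp

lemma Dc_mono_mono (σ : RingAut S) {m : ℕ} (c e' : S) {p q : ℕ} (hp : p < m)
    (hq : q < m) (e : ℕ) :
    Dc σ m (mono m c p) (mono m e' q) e
      = if p + q = e then c * (σ ^ p) e' else 0 := by
  classical
  rw [Dc_mono_left σ c hp]
  rw [Finset.sum_eq_single (⟨q, hq⟩ : Fin m)]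
  · simp [mono]
  · intro j _ hj
    have hjq : (j : ℕ) ≠ q := by simpa [Fin.ext_iff] using hj
    simp [mono, hjq]
  · simp

lemma mul_const_apply (σ : RingAut S) {m : ℕ} (hm : 0 < m) (a' c : S)
    (x : Fin m → S) (d : Fin m) :
    petitMul σ m (constF m a') x (mono m c 0) d = x d * (σ ^ (d : ℕ)) c := by
  classical
  rw [petitMul_const_apply σ hm a', Dc_mono_right σ c hm, Dc_mono_right σ c hm]
  have h2 : (∑ i : Fin m, if (i : ℕ) + 0 = m + (d : ℕ)
      then x i * (σ ^ (i : ℕ)) c else 0) = 0 := by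
    refine Finset.sum_eq_zero fun i _ => ?_
    have : ¬ ((i : ℕ) + 0 = m + (d : ℕ)) := by have := i.isLt; omega
    rw [if_neg this]
  rw [h2, zero_mul, add_zero]
  rw [Finset.sum_eq_single d]
  · simp
  · intro i _ hi
    have : (i : ℕ) ≠ (d : ℕ) := fun h => hi (Fin.ext h)
    simp [this]
  · simp

lemma const_mul_apply (σ : RingAut S) {m : ℕ} (hm : 0 < m) (a' c : S)
    (x : Fin m → S) (d : Fin m) :
    petitMul σ m (constF m a') (mono m c 0) x d = c * x d := by
  classical
  rw [petitMul_const_apply σ hm a', Dc_mono_left σ c hm, Dc_mono_left σ c hm]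
  have h2 : (∑ j : Fin m, if 0 + (j : ℕ) = m + (d : ℕ)
      then c * (σ ^ 0) (x j) else 0) = 0 := by
    refine Finset.sum_eq_zero fun j _ => ?_
    have : ¬ (0 + (j : ℕ) = m + (d : ℕ)) := by have := j.isLt; omega
    rw [if_neg this]
  rw [h2, zero_mul, add_zero]
  rw [Finset.sum_eq_single d]
  · norm_num
  · intro j _ hj
    have : (j : ℕ) ≠ (d : ℕ) := fun h => hj (Fin.ext h)
    simp [this]
  · simp

lemma mul_pone (σ : RingAut S) {m : ℕ} (hm : 0 < m) (a' : S) (x : Fin m → S) :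
    petitMul σ m (constF m a') x (pone m) = x := by
  funext d
  have : pone m = mono m (1 : S) 0 := rfl
  rw [this, mul_const_apply σ hm a' 1 x d, map_one, mul_one]

lemma lpow_one' (σ : RingAut S) {m : ℕ} (hm : 0 < m) (a' : S) (z : Fin m → S) :
    lpow σ m (constF m a') z 1 = z := by
  show petitMul σ m (constF m a') z (lpow σ m (constF m a') z 0) = z
  exact mul_pone σ hm a' z

lemma lpow_t (σ : RingAut S) {m : ℕ} (hm : 0 < m) (a' : S) :
    ∀ s : ℕ, s < m → lpow σ m (constF m a') (mono m 1 1) s = mono m 1 s := by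
  intro s
  induction s with
  | zero => intro _; rfl
  | succ s ih =>
    intro hs
    have hs' : s < m := by omega
    have h1m : 1 < m := by omega
    show petitMul σ m (constF m a') (mono m 1 1) (lpow σ m (constF m a') (mono m 1 1) s)
        = mono m 1 (s + 1)
    rw [ih hs']
    funext d
    rw [petitMul_const_apply σ hm a', Dc_mono_mono σ 1 1 h1m hs',
      Dc_mono_mono σ 1 1 h1m hs']
    have h2 : ¬ (1 + s = m + (d : ℕ)) := by omega
    rw [if_neg h2, zero_mul, add_zero]
    by_cases h : 1 + s = (d : ℕ)
    · rw [if_pos h]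
      have hd : (d : ℕ) = s + 1 := by omega
      simp [mono, hd]
    · rw [if_neg h]
      have : (d : ℕ) ≠ s + 1 := by omega
      simp [mono, this]

lemma lpow_t_top (σ : RingAut S) {m : ℕ} (hm : 1 < m) (a' : S) :
    lpow σ m (constF m a') (mono m 1 1) m = mono m a' 0 := by
  obtain ⟨p, hp⟩ : ∃ p, m = p + 1 := ⟨m - 1, by omega⟩
  subst hp
  have hm0 : 0 < p + 1 := by omega
  have hpp : p < p + 1 := by omega
  have h1p : 1 < p + 1 := hm
  show petitMul σ (p + 1) (constF (p + 1) a') (mono (p + 1) 1 1)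
      (lpow σ (p + 1) (constF (p + 1) a') (mono (p + 1) 1 1) p) = mono (p + 1) a' 0
  rw [lpow_t σ hm0 a' p hpp]
  funext d
  rw [petitMul_const_apply σ hm0 a', Dc_mono_mono σ 1 1 h1p hpp,
    Dc_mono_mono σ 1 1 h1p hpp]
  have h1 : ¬ (1 + p = (d : ℕ)) := by have := d.isLt; omega
  rw [if_neg h1, zero_add]
  by_cases h : (d : ℕ) = 0
  · have h2 : 1 + p = (p + 1) + (d : ℕ) := by omega
    rw [if_pos h2]
    have : mono (p + 1) a' 0 d = a' := by simp [mono, h]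
    rw [this, h]
    norm_num
  · have h2 : ¬ (1 + p = (p + 1) + (d : ℕ)) := by omega
    rw [if_neg h2]
    simp [mono, h]

lemma zero_lpow (σ : RingAut S) {m : ℕ} (hm : 0 < m) (b' : S) :
    ∀ s : ℕ, 1 ≤ s → lpow σ m (constF m b') (0 : Fin m → S) s = 0 := by
  intro s hs
  obtain ⟨p, hp⟩ : ∃ p, s = p + 1 := ⟨s - 1, by omega⟩
  subst hp
  show petitMul σ m (constF m b') 0 (lpow σ m (constF m b') 0 p) = 0
  funext d
  rw [petitMul_const_apply σ hm b']
  have hD : ∀ e : ℕ, Dc σ m (0 : Fin m → S) (lpow σ m (constF m b') 0 p) e = 0 :=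
    fun e => Dc_eq_zero fun i j _ => by simp
  rw [hD, hD, zero_mul, add_zero]
  rfl


end PetitProof

open PetitProof

/-- Corollary `c:new`: over an integral domain, if `n ∤ m` then every nonzero
homomorphism `G : S_a → S_b` with `G|_S = τ` commuting with `σ` is monomial of
degree one: `G(t) = α t` for some nonzero `α ∈ S`. -/
theorem stmt16 {S : Type*} [CommRing S] [IsDomain S] (σ τ : RingAut S)
    (n : ℕ) (hn : orderOf σ = n) (hn0 : 0 < n) (m : ℕ) (hm : 0 < m)
    (hnm : ¬ n ∣ m) (hcomm : ∀ x, τ (σ x) = σ (τ x)) (a b : Sˣ)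
    (G : (Fin m → S) → (Fin m → S))
    (hhom : IsPetitHom σ m (constF m (a : S)) (constF m (b : S)) G)
    (hres : ∀ c : S, G (mono m c 0) = mono m (τ c) 0) :
    ∃ α : S, α ≠ 0 ∧ G (mono m 1 1) = mono m α 1 := by
  classical
  obtain ⟨Gadd, Gmul, Gone⟩ := hhom
  have G0 : G 0 = 0 := by
    have h := Gadd 0 0
    rw [add_zero] at h
    exact left_eq_add.mp h
  by_cases h1m : 1 < m
  swap
  · -- m = 1 : t = 0 in S_a and the claim is trivial
    have hm1 : m = 1 := by omega
    subst hm1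
    refine ⟨1, one_ne_zero, ?_⟩
    have e1 : mono 1 (1 : S) 1 = 0 := by
      funext i
      have hi : (i : ℕ) = 0 := by have := i.isLt; omega
      simp [mono, hi]
    rw [e1, G0]
  -- main case 1 < m
  set z := G (mono m 1 1) with hzdef
  have hcomm' : ∀ (s : ℕ) (c : S), τ ((σ ^ s) c) = (σ ^ s) (τ c) := by
    intro s
    induction s with
    | zero => intro c; rw [pow_zero]; rfl
    | succ s ih =>
      intro c
      have e1 : ∀ x : S, (σ ^ (s + 1)) x = (σ ^ s) (σ x) := by
        intro x; rw [pow_succ]; rfl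
      rw [e1, e1, ih (σ c), hcomm c]
  have hlpow : ∀ (X : Fin m → S) (s : ℕ),
      G (lpow σ m (constF m (a : S)) X s) = lpow σ m (constF m (b : S)) (G X) s := by
    intro X s
    induction s with
    | zero => exact Gone
    | succ s ih =>
      show G (petitMul σ m (constF m (a : S)) X (lpow σ m (constF m (a : S)) X s)) = _
      rw [Gmul, ih]
      rfl
  have hw : ∀ s : ℕ, s < m → lpow σ m (constF m (b : S)) z s = G (mono m 1 s) := by
    intro s hs
    rw [← lpow_t σ hm (a : S) s hs, hlpow]
  -- the support constraint coming from the commutation relation with scalars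
  have hσ : ∀ (s : ℕ), s < m → ∀ d : Fin m,
      lpow σ m (constF m (b : S)) z s d ≠ 0 → (d : ℕ) ≡ s [MOD n] := by
    intro s hs d hd
    have key : ∀ e : S, (σ ^ (d : ℕ)) e = (σ ^ s) e := by
      intro e
      obtain ⟨c, hc⟩ := τ.surjective e
      have h1 : petitMul σ m (constF m (a : S)) (mono m 1 s) (mono m c 0)
          = petitMul σ m (constF m (a : S)) (mono m ((σ ^ s) c) 0) (mono m 1 s) := by
        funext d'
        rw [mul_const_apply σ hm _ c _ d', const_mul_apply σ hm _ _ _ d']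
        by_cases hds : (d' : ℕ) = s
        · simp [mono, hds]
        · simp [mono, hds]
      have h2 := congrArg G h1
      rw [Gmul, Gmul, hres c, hres ((σ ^ s) c), ← hw s hs] at h2
      have h3 := congrFun h2 d
      rw [mul_const_apply σ hm _ _ _ d, const_mul_apply σ hm _ _ _ d,
        hcomm' s c, hc] at h3
      have h4 : (σ ^ (d : ℕ)) e * lpow σ m (constF m (b : S)) z s d
          = (σ ^ s) e * lpow σ m (constF m (b : S)) z s d := by
        rw [mul_comm ((σ ^ (d : ℕ)) e)]
        exact h3
      exact mul_right_cancel₀ hd h4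
    have hpow : (σ : RingAut S) ^ (d : ℕ) = σ ^ s := by
      ext e; exact key e
    have hmod := pow_eq_pow_iff_modEq.mp hpow
    rwa [hn] at hmod
  -- t^m = a gives L(z, m) = τ(a)
  have hlm : lpow σ m (constF m (b : S)) z m = mono m (τ (a : S)) 0 := by
    have h1 := congrArg G (lpow_t_top σ h1m (a : S))
    rw [hlpow, hres] at h1
    exact h1
  have hτa : τ (a : S) ≠ 0 := fun h => a.ne_zero (τ.injective (by rw [h, map_zero]))
  have hzne : z ≠ 0 := by
    intro h0
    have h1 : lpow σ m (constF m (b : S)) z m = 0 := by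
      rw [h0]
      exact zero_lpow σ hm (b : S) m (by omega)
    rw [hlm] at h1
    apply hτa
    have h2 := congrFun h1 ⟨0, hm⟩
    simpa [mono] using h2
  -- the top of the support of z
  have hTne : (Finset.univ.filter fun i => z i ≠ 0).Nonempty := by
    by_contra hne
    rw [Finset.not_nonempty_iff_eq_empty, Finset.filter_eq_empty_iff] at hne
    apply hzne
    funext i
    have := hne (Finset.mem_univ i)
    simpa using this
  set k := (Finset.univ.filter fun i => z i ≠ 0).max' hTne with hkdef
  have hzk : z k ≠ 0 :=
    (Finset.mem_filter.mp ((Finset.univ.filter fun i => z i ≠ 0).max'_mem hTne)).2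
  have hle : ∀ i, z i ≠ 0 → (i : ℕ) ≤ (k : ℕ) := by
    intro i hi
    exact Fin.le_def.mp (Finset.le_max'
      (Finset.univ.filter fun i => z i ≠ 0) i (Finset.mem_filter.mpr ⟨Finset.mem_univ i, hi⟩))
  have hz1 : ∀ i : Fin m, z i ≠ 0 → (i : ℕ) ≡ 1 [MOD n] := by
    intro i hi
    refine hσ 1 h1m i ?_
    rw [lpow_one' σ hm (b : S) z]
    exact hi
  have hn1 : ∀ i : ℕ, i = 0 → ¬ (i ≡ 1 [MOD n]) := by
    rintro i rfl h
    have hd1 : n ∣ 1 := Nat.modEq_zero_iff_dvd.mp h.symm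
    have : n = 1 := Nat.dvd_one.mp hd1
    exact hnm (this ▸ one_dvd m)
  have hk1mod : (k : ℕ) ≡ 1 [MOD n] := hz1 k hzk
  have hkpos : 1 ≤ (k : ℕ) := by
    rcases Nat.eq_zero_or_pos (k : ℕ) with h | h
    · exact absurd hk1mod (hn1 _ h)
    · exact h
  by_cases hk1 : (k : ℕ) = 1
  · -- degree one : done
    refine ⟨z k, hzk, ?_⟩
    funext i
    show z i = mono m (z k) 1 i
    by_cases hzi : z i = 0
    · have hne1 : (i : ℕ) ≠ 1 := by
        intro h
        have hik : i = k := Fin.ext (by rw [h, hk1])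
        rw [hik] at hzi
        exact hzk hzi
      simp [mono, hne1, hzi]
    · have hle1 : (i : ℕ) ≤ 1 := hk1 ▸ hle i hzi
      have hne0 : (i : ℕ) ≠ 0 := fun h => hn1 _ h (hz1 i hzi)
      have heq1 : (i : ℕ) = 1 := by omega
      have hik : i = k := Fin.ext (by rw [heq1, hk1])
      rw [hik]
      simp [mono, hk1]
  · -- degree k ≥ 2 : contradiction
    exfalso
    have hK2 : 2 ≤ (k : ℕ) := by omega
    have hKm : (k : ℕ) < m := k.isLt
    -- left-nested powers of z keep nonzero top coefficient while degrees stay < m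
    have main : ∀ s : ℕ, 1 ≤ s → ∀ h : s * (k : ℕ) < m,
        (∀ j : Fin m, lpow σ m (constF m (b : S)) z s j ≠ 0 → (j : ℕ) ≤ s * (k : ℕ)) ∧
        lpow σ m (constF m (b : S)) z s ⟨s * (k : ℕ), h⟩ ≠ 0 := by
      intro s hs1
      induction s, hs1 using Nat.le_induction with
      | base =>
        intro h
        constructor
        · intro j hj
          rw [lpow_one' σ hm (b : S) z] at hj
          have := hle j hj
          omega
        · have hkk : (⟨1 * (k : ℕ), h⟩ : Fin m) = k := Fin.ext (by simp)
          rw [lpow_one' σ hm (b : S) z, hkk]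
          exact hzk
      | succ s hs1 ih =>
        intro h'
        have hsucc : (s + 1) * (k : ℕ) = s * (k : ℕ) + (k : ℕ) := Nat.succ_mul s (k : ℕ)
        have hsK : s * (k : ℕ) < m := by omega
        obtain ⟨ihb, iht⟩ := ih hsK
        have hDhigh : ∀ e : ℕ, s * (k : ℕ) + (k : ℕ) < e →
            Dc σ m z (lpow σ m (constF m (b : S)) z s) e = 0 := by
          intro e he
          refine Dc_eq_zero fun i j hij => ?_
          by_cases hzi : z i = 0
          · rw [hzi, zero_mul]
          by_cases hwj : lpow σ m (constF m (b : S)) z s j = 0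
          · rw [hwj, map_zero, mul_zero]
          exfalso
          have h1 := hle i hzi
          have h2 := ihb j hwj
          omega
        constructor
        · intro j hj
          by_contra hgt
          push_neg at hgt
          apply hj
          show petitMul σ m (constF m (b : S)) z
              (lpow σ m (constF m (b : S)) z s) j = 0
          rw [petitMul_const_apply σ hm]
          rw [hDhigh (j : ℕ) (by omega), hDhigh (m + (j : ℕ)) (by omega),
            zero_mul, add_zero]
        · show petitMul σ m (constF m (b : S)) z
              (lpow σ m (constF m (b : S)) z s) ⟨(s + 1) * (k : ℕ), h'⟩ ≠ 0
          rw [petitMul_const_apply σ hm]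
          have hv : ((⟨(s + 1) * (k : ℕ), h'⟩ : Fin m) : ℕ) = (s + 1) * (k : ℕ) := rfl
          rw [hv]
          rw [hDhigh (m + (s + 1) * (k : ℕ)) (by omega), zero_mul, add_zero]
          have hidx : (s + 1) * (k : ℕ) = (k : ℕ) + s * (k : ℕ) := by omega
          rw [hidx]
          have htop := Dc_top (σ := σ) (m := m) (x := z)
            (y := lpow σ m (constF m (b : S)) z s) (p := k)
            (q := ⟨s * (k : ℕ), hsK⟩) hle ihb
          rw [htop]
          refine mul_ne_zero hzk ?_
          intro h0
          exact iht ((σ ^ (k : ℕ)).injective (by rw [h0, map_zero]))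
    -- choose the largest Q with Q * k < m
    set Q := Nat.findGreatest (fun s => s * (k : ℕ) < m) m with hQdef
    have hQ1 : 1 ≤ Q := by
      have h := Nat.le_findGreatest (P := fun s => s * (k : ℕ) < m) (n := m) (m := 1)
        (by omega) (by simpa using hKm)
      omega
    have hQKm : Q * (k : ℕ) < m := by
      have h := Nat.findGreatest_spec (P := fun s => s * (k : ℕ) < m) (n := m) (m := 1)
        (by omega) (by simpa using hKm)
      exact h
    have hQm : Q < m := by
      have h1 : Q ≤ Q * (k : ℕ) := Nat.le_mul_of_pos_right Q (by omega)
      omega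
    have hmle : m ≤ (Q + 1) * (k : ℕ) := by
      by_cases hQm1 : Q + 1 ≤ m
      · have h := Nat.findGreatest_is_greatest (P := fun s => s * (k : ℕ) < m)
          (n := m) (k := Q + 1) (by omega) hQm1
        omega
      · exfalso; omega
    have hsuccQ : (Q + 1) * (k : ℕ) = Q * (k : ℕ) + (k : ℕ) := Nat.succ_mul Q (k : ℕ)
    have hs'm : Q + 1 < m := by
      have h2 : Q * 2 ≤ Q * (k : ℕ) := Nat.mul_le_mul_left Q hK2
      have h3 : Q * 2 = Q + Q := by omega
      omega
    obtain ⟨d0, hd0m, hmd0⟩ : ∃ d0, d0 < m ∧ m + d0 = (k : ℕ) + Q * (k : ℕ) :=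
      ⟨Q * (k : ℕ) + (k : ℕ) - m, by omega, by omega⟩
    obtain ⟨ihb, iht⟩ := main Q hQ1 hQKm
    -- the coefficient of L(z, Q+1) in degree d0
    have hcoeff : lpow σ m (constF m (b : S)) z (Q + 1) ⟨d0, hd0m⟩
        = Dc σ m z (lpow σ m (constF m (b : S)) z Q) d0
          + Dc σ m z (lpow σ m (constF m (b : S)) z Q) (m + d0) * (σ ^ d0) (b : S) := by
      show petitMul σ m (constF m (b : S)) z
          (lpow σ m (constF m (b : S)) z Q) ⟨d0, hd0m⟩ = _
      rw [petitMul_const_apply σ hm]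
    have hDtop : Dc σ m z (lpow σ m (constF m (b : S)) z Q) (m + d0)
        = z k * (σ ^ (k : ℕ)) (lpow σ m (constF m (b : S)) z Q ⟨Q * (k : ℕ), hQKm⟩) := by
      rw [hmd0]
      exact Dc_top (σ := σ) (m := m) (x := z)
        (y := lpow σ m (constF m (b : S)) z Q) (p := k)
        (q := ⟨Q * (k : ℕ), hQKm⟩) hle ihb
    have hDtopne : Dc σ m z (lpow σ m (constF m (b : S)) z Q) (m + d0) ≠ 0 := by
      rw [hDtop]
      refine mul_ne_zero hzk ?_
      intro h0
      exact iht ((σ ^ (k : ℕ)).injective (by rw [h0, map_zero]))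
    by_cases HD : d0 ≡ Q + 1 [MOD n]
    · -- then n ∣ m, contradiction
      have h1 : (k : ℕ) + Q * (k : ℕ) ≡ 1 + Q * 1 [MOD n] :=
        Nat.ModEq.add hk1mod (Nat.ModEq.mul_left Q hk1mod)
      have h2 : m + d0 ≡ Q + 1 [MOD n] := by
        rw [hmd0]
        simpa [Nat.add_comm] using h1
      have h3 : m + d0 ≡ 0 + d0 [MOD n] := by
        rw [Nat.zero_add]
        exact h2.trans HD.symm
      have h4 : m ≡ 0 [MOD n] := Nat.ModEq.add_right_cancel' d0 h3
      exact hnm (Nat.modEq_zero_iff_dvd.mp h4)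
    · -- then the coefficient in degree d0 is nonzero, contradicting the constraint
      have hDlow : Dc σ m z (lpow σ m (constF m (b : S)) z Q) d0 = 0 := by
        refine Dc_eq_zero fun i j hij => ?_
        by_cases hzi : z i = 0
        · rw [hzi, zero_mul]
        by_cases hwj : lpow σ m (constF m (b : S)) z Q j = 0
        · rw [hwj, map_zero, mul_zero]
        exfalso
        apply HD
        have hi1 : (i : ℕ) ≡ 1 [MOD n] := hz1 i hzi
        have hjQ : (j : ℕ) ≡ Q [MOD n] := hσ Q hQm j hwj
        have hadd := Nat.ModEq.add hi1 hjQ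
        rw [hij] at hadd
        rwa [Nat.add_comm 1 Q] at hadd
      have hσb : (σ ^ d0) (b : S) ≠ 0 := by
        intro h0
        exact b.ne_zero ((σ ^ d0).injective (by rw [h0, map_zero]))
      have hne : lpow σ m (constF m (b : S)) z (Q + 1) ⟨d0, hd0m⟩ ≠ 0 := by
        rw [hcoeff, hDlow, zero_add]
        exact mul_ne_zero hDtopne hσb
      exact HD (hσ (Q + 1) hs'm ⟨d0, hd0m⟩ hne)
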